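/- Consider the surface X(r,v) = (−r + arctan r, 0, arctan r) + r(cos v, sin v, 0) for r > 0, v ∈ ℝ, in 𝕃³. Then: (i) its third coordinate satisfies 0 < x₃ < π/2; (ii) the first fundamental form determinant W = g₁₁g₂₂ − g₁₂² is positive (the surface is spacelike) if and only if cos v ≠ 1; (iii) the points with cos v = 1 parametrize the curve r ↦ arctan(r)·(1,0,1), which lies on a straight line with lightlike direction (1,0,1). -/

import Mathlib

noncomputable section

def lip (v w : ℝ × ℝ × ℝ) : ℝ := v.1 * w.1 + v.2.1 * w.2.1 - v.2.2 * w.2.2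

/-- The explicit Riemann maximal example for λ = 2:
X(r,v) = (−r + arctan r, 0, arctan r) + r(cos v, sin v, 0), r > 0.
(i) 0 < x₃ < π/2; (ii) W > 0 iff cos v ≠ 1; (iii) the points with cos v = 1
form the curve r ↦ arctan r·(1,0,1), lying on a line with lightlike
direction (1,0,1). -/
theorem explicit_riemann_maximal_lambda_two
    (X : ℝ → ℝ → ℝ × ℝ × ℝ)
    (hX : X = fun r v =>
      (-r + Real.arctan r + r * Real.cos v, r * Real.sin v, Real.arctan r)) :
    ∀ r v : ℝ, 0 < r →
      (0 < (X r v).2.2 ∧ (X r v).2.2 < Real.pi / 2) ∧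
      (lip (deriv (fun t => X t v) r) (deriv (fun t => X t v) r)
          * lip (deriv (fun t => X r t) v) (deriv (fun t => X r t) v)
        - (lip (deriv (fun t => X t v) r) (deriv (fun t => X r t) v))^2 > 0 ↔
        Real.cos v ≠ 1) ∧
      (Real.cos v = 1 → X r v = Real.arctan r • ((1:ℝ), (0:ℝ), (1:ℝ))) ∧
      lip ((1:ℝ), (0:ℝ), (1:ℝ)) ((1:ℝ), (0:ℝ), (1:ℝ)) = 0 := by
  intro r v hr
  have hdr : HasDerivAt (fun t => X t v)
      ((-1 + 1 / (1 + r ^ 2) + 1 * Real.cos v, 1 * Real.sin v, 1 / (1 + r ^ 2))) r := by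
    rw [hX]
    exact HasDerivAt.prodMk (((hasDerivAt_id r).neg.add (Real.hasDerivAt_arctan r)).add
        ((hasDerivAt_id r).mul_const _))
      (HasDerivAt.prodMk ((hasDerivAt_id r).mul_const _) (Real.hasDerivAt_arctan r))
  have hdv : HasDerivAt (fun t => X r t)
      ((0 + r * -Real.sin v, r * Real.cos v, (0:ℝ))) v := by
    rw [hX]
    exact HasDerivAt.prodMk ((hasDerivAt_const v (-r + Real.arctan r)).add
        ((Real.hasDerivAt_cos v).const_mul r))
      (HasDerivAt.prodMk ((Real.hasDerivAt_sin v).const_mul r)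
        (hasDerivAt_const v (Real.arctan r)))
  have edr : deriv (fun t => X t v) r
      = (-1 + 1 / (1 + r ^ 2) + 1 * Real.cos v, 1 * Real.sin v, 1 / (1 + r ^ 2)) := by
    simpa using hdr.deriv
  have edv : deriv (fun t => X r t) v = (0 + r * -Real.sin v, r * Real.cos v, (0:ℝ)) := by
    simpa using hdv.deriv
  refine ⟨⟨?_, ?_⟩, ?_, ?_, ?_⟩
  · rw [hX]; have := Real.arctan_strictMono hr
    simpa [Real.arctan_zero] using this
  · rw [hX]; exact Real.arctan_lt_pi_div_two r
  · rw [edr, edv]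
    simp only [lip]
    set u : ℝ := 1 / (1 + r ^ 2) with hu
    set c := Real.cos v
    set s := Real.sin v
    have hs : s ^ 2 = 1 - c ^ 2 := Real.sin_sq v
    have hu0 : 0 < u := by positivity
    have hu1 : u < 1 := by
      rw [hu, div_lt_one (by positivity)]; nlinarith
    have hc1 : c ≤ 1 := Real.cos_le_one v
    have hc2 : -1 ≤ c := Real.neg_one_le_cos v
    have key : (-1 + u + 1 * c) * (-1 + u + 1 * c) + 1 * s * (1 * s) - u * u =
        2 * (1 - c) * (1 - u) := by nlinarith [hs]
    constructor
    · intro hW hceq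
      rw [hceq] at hW
      have hs0 : s ^ 2 = 0 := by rw [hs, hceq]; ring
      have : s = 0 := by nlinarith
      rw [this] at hW
      nlinarith [hW]
    · intro hne
      have hc : c < 1 := lt_of_le_of_ne hc1 hne
      have hW : (-1 + u + 1 * c) * (0 + r * -s) + 1 * s * (r * c) - u * 0
          = r * s * (1 - u) := by ring
      have hE22 : (0 + r * -s) * (0 + r * -s) + r * c * (r * c) - 0 * 0 = r ^ 2 := by
        nlinarith [hs]
      rw [key, hW, hE22]
      have : 2 * (1 - c) * (1 - u) * r ^ 2 - (r * s * (1 - u)) ^ 2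
          = r ^ 2 * (1 - u) * (1 - c) * ((1 - c) + u * (1 + c)) := by
        nlinarith [hs]
      rw [this]
      have h4 : 0 < (1 - c) + u * (1 + c) := by nlinarith
      have h5 : (0:ℝ) < 1 - u := by linarith
      have h6 : (0:ℝ) < 1 - c := by linarith
      have := mul_pos (mul_pos (mul_pos (pow_pos hr 2) h5) h6) h4
      linarith
  · intro hc
    have hs : Real.sin v = 0 := by
      have := Real.sin_sq v
      rw [hc] at this
      nlinarith [this]
    rw [hX]
    simp only [hc, hs, Prod.smul_def, smul_eq_mul, mul_one, mul_zero]
    norm_num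
  · norm_num [lip]
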